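/- The broadcast rate β(G) of the symmetric neighboring interference single unicast index coding problem with K messages, D interfering messages after and U = gcd(K, D+1) − 1 interfering messages before the desired message is exactly D+1; equivalently, the capacity is 1/(D+1). -/

import Mathlib

set_option linter.unusedSectionVars false

namespace SNI
open Finset


/-- linear combination of generators -/
def combo {a b : ℕ} (g : Fin b → ZMod a → ZMod 2) (c : Fin b → ZMod 2) : ZMod a → ZMod 2 :=
  fun q => ∑ i, c i * g i q

/-- Solution structure for the coprime one-sided problem. -/
structure Sol (a b : ℕ) where
  g : Fin b → ZMod a → ZMod 2
  combo_i : ∀ p : ZMod a, ∃ c : Fin b → ZMod 2,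
    combo g c p = 1 ∧ ∀ m : ℕ, 1 ≤ m → m ≤ b - 1 → combo g c (p + (m : ZMod a)) = 0
  combo_ii : ∀ p : ℕ, 1 ≤ p → p < b → ∃ c : Fin b → ZMod 2,
    combo g c ((p : ℕ) : ZMod a) = 1 ∧
      ∀ i : ℕ, i < b → i ≠ p → combo g c ((i : ℕ) : ZMod a) = 0

lemma castinj {n : ℕ} [NeZero n] {i j : ℕ} (hi : i < n) (hj : j < n)
    (h : (i : ZMod n) = j) : i = j := by
  rw [← ZMod.val_cast_of_lt hi, ← ZMod.val_cast_of_lt hj, h]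

lemma mod_two_cases {x : ℕ} {n : ℕ} (hx : x < 2 * n) :
    x % n = if x < n then x else x - n := by
  split_ifs with h
  · exact Nat.mod_eq_of_lt h
  · rw [Nat.mod_eq_sub_mod (le_of_not_gt h), Nat.mod_eq_of_lt (by omega)]

/-- base case b = 1 -/
def solOne (a : ℕ) : Sol a 1 where
  g := fun _ _ => 1
  combo_i := fun p => ⟨fun _ => 1, by simp [combo], fun m h1 h2 => by omega⟩
  combo_ii := fun p h1 h2 => by omega

section Lift
variable {a' b : ℕ} [NeZero a'] [NeZero (a' + b)]

/-- folding map -/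
def phi (a' b : ℕ) (q : ZMod (a' + b)) : ZMod a' :=
  if q.val < a' then (q.val : ZMod a') else ((q.val - a' : ℕ) : ZMod a')

lemma combo_phi (g : Fin b → ZMod a' → ZMod 2) (c : Fin b → ZMod 2) (q : ZMod (a' + b)) :
    combo (fun i => g i ∘ phi a' b) c q = combo g c (phi a' b q) := rfl

/-- the lift step: from `Sol (a-b) b` to `Sol a b`, when `b ≤ a - b`. -/
def solLift (hb : 1 ≤ b) (hba : b ≤ a') (S : Sol a' b) : Sol (a' + b) b where
  g := fun i => S.g i ∘ phi a' b
  combo_i := by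
    intro p
    have ha' : 0 < a' := Nat.pos_of_ne_zero (NeZero.ne a')
    have hpv : p.val < a' + b := ZMod.val_lt p
    have key : ∀ m : ℕ, m ≤ b - 1 → (p + (m : ZMod (a' + b))).val = (p.val + m) % (a' + b) := by
      intro m hm
      rw [ZMod.val_add, ZMod.val_cast_of_lt (by omega)]
    rcases lt_trichotomy p.val a' with hc | hc | hc
    · -- case 1 : p.val < a'
      obtain ⟨c, h1, h2⟩ := S.combo_i ((p.val : ℕ) : ZMod a')
      refine ⟨c, ?_, ?_⟩
      · rw [combo_phi, phi, if_pos hc, h1]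
      · intro m hm1 hm2
        rw [combo_phi]
        have hval : (p + (m : ZMod (a' + b))).val = p.val + m := by
          rw [key m hm2, Nat.mod_eq_of_lt (by omega)]
        have heq : phi a' b (p + (m : ZMod (a' + b)))
            = ((p.val : ℕ) : ZMod a') + ((m : ℕ) : ZMod a') := by
          rw [phi, hval]
          split_ifs with h
          · push_cast; ring
          · have h3 : ((p.val + m - a' : ℕ) : ZMod a') = ((p.val + m : ℕ) : ZMod a') := by
              have h2 : (p.val + m) = (p.val + m - a') + a' := by omega
              rw [h2]; push_cast; simp
            rw [h3]; push_cast; ring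
        rw [heq]
        exact h2 m hm1 hm2
    · -- case 2 : p.val = a'
      obtain ⟨c, h1, h2⟩ := S.combo_i (0 : ZMod a')
      refine ⟨c, ?_, ?_⟩
      · rw [combo_phi, phi, if_neg (by omega), show p.val - a' = 0 by omega]
        simpa using h1
      · intro m hm1 hm2
        rw [combo_phi]
        have hval : (p + (m : ZMod (a' + b))).val = a' + m := by
          rw [key m hm2, hc, Nat.mod_eq_of_lt (by omega)]
        have heq : phi a' b (p + (m : ZMod (a' + b))) = (0 : ZMod a') + ((m : ℕ) : ZMod a') := by
          rw [phi, hval, if_neg (by omega), show a' + m - a' = m by omega]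
          simp
        rw [heq]
        exact h2 m hm1 hm2
    · -- case 3 : p.val > a'
      obtain ⟨c, h1, h2⟩ := S.combo_ii (p.val - a') (by omega) (by omega)
      refine ⟨c, ?_, ?_⟩
      · rw [combo_phi, phi, if_neg (by omega), h1]
      · intro m hm1 hm2
        rw [combo_phi]
        by_cases hw : p.val + m < a' + b
        · have hval : (p + (m : ZMod (a' + b))).val = p.val + m := by
            rw [key m hm2, Nat.mod_eq_of_lt hw]
          have heq : phi a' b (p + (m : ZMod (a' + b))) = ((p.val - a' + m : ℕ) : ZMod a') := by
            rw [phi, hval, if_neg (by omega)]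
            congr 1; omega
          rw [heq]
          exact h2 (p.val - a' + m) (by omega) (by omega)
        · have hval : (p + (m : ZMod (a' + b))).val = p.val - a' + m - b := by
            rw [key m hm2, mod_two_cases (by omega), if_neg (by omega)]
            omega
          have heq : phi a' b (p + (m : ZMod (a' + b)))
              = ((p.val - a' + m - b : ℕ) : ZMod a') := by
            rw [phi, hval, if_pos (by omega)]
          rw [heq]
          exact h2 (p.val - a' + m - b) (by omega) (by omega)
  combo_ii := by
    intro p hp1 hp2
    obtain ⟨c, h1, h2⟩ := S.combo_ii p hp1 hp2
    have hcast : ∀ i : ℕ, i < b → phi a' b ((i : ℕ) : ZMod (a' + b)) = ((i : ℕ) : ZMod a') := by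
      intro i hi
      have ha' : 0 < a' := Nat.pos_of_ne_zero (NeZero.ne a')
      rw [phi, ZMod.val_cast_of_lt (by omega), if_pos (by omega)]
    refine ⟨c, ?_, ?_⟩
    · rw [combo_phi, hcast p hp2, h1]
    · intro i hi hne
      rw [combo_phi, hcast i hi]
      exact h2 i hi hne

end Lift


section DualPart
variable {a r : ℕ} [NeZero a]

lemma char2 (x y : ZMod 2) (h : x + y = 0) : x = y := by revert x y; decide

lemma zsum (f : ZMod a → ZMod 2) :
    (∑ q : ZMod a, f q) = ∑ n ∈ Finset.range a, f ↑n := by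
  rw [← Fin.sum_univ_eq_sum_range (fun n => f ↑n) a]
  exact (Fintype.sum_bijective (fun i : Fin a => ((i : ℕ) : ZMod a))
    (by
      rw [Fintype.bijective_iff_injective_and_card]
      refine ⟨fun i j h => ?_, by simp [ZMod.card]⟩
      exact Fin.ext (castinj i.isLt j.isLt h))
    _ _ (fun i => rfl)).symm


def dot (u v : ZMod a → ZMod 2) : ZMod 2 := ∑ q : ZMod a, u q * v q

def eVec (s : ZMod a) : ZMod a → ZMod 2 := fun q => if q = s then 1 else 0

lemma dot_eVec (u : ZMod a → ZMod 2) (s : ZMod a) (c : ZMod 2) :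
    (∑ q : ZMod a, u q * (c * eVec s q)) = u s * c := by
  rw [Finset.sum_eq_single s]
  · simp [eVec, mul_comm]
  · intro q _ hq; simp [eVec, hq]
  · simp


/-- window submatrix -/
def blockG (S : Sol a r) (s : ZMod a) : Matrix (Fin r) (Fin r) (ZMod 2) :=
  Matrix.of fun i m => S.g i (s + ((m : ℕ) : ZMod a))

lemma inv_block (hr : 1 ≤ r) (S : Sol a r) (s : ZMod a) : IsUnit (blockG S s).det := by
  choose d hd1 hd2 using S.combo_i
  set D : Matrix (Fin r) (Fin r) (ZMod 2) :=
    Matrix.of (fun j i => d (s + ((j : ℕ) : ZMod a)) i) with hD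
  have hT : ∀ j m : Fin r,
      (D * blockG S s) j m = combo S.g (d (s + ((j : ℕ) : ZMod a))) (s + ((m : ℕ) : ZMod a)) := by
    intro j m
    simp [Matrix.mul_apply, combo, hD, blockG]
  have htri : ∀ j m : Fin r, j < m → (D * blockG S s) j m = 0 := by
    intro j m hlt
    rw [hT]
    have hle : (j : ℕ) ≤ (m : ℕ) := le_of_lt hlt
    have heq : s + ((m : ℕ) : ZMod a)
        = (s + ((j : ℕ) : ZMod a)) + ((((m : ℕ) - (j : ℕ) : ℕ)) : ZMod a) := by
      rw [Nat.cast_sub hle]; ring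
    rw [heq]
    exact hd2 _ ((m : ℕ) - (j : ℕ)) (by omega) (by omega)
  have hdet : (D * blockG S s).det = 1 := by
    rw [Matrix.det_of_lowerTriangular _ htri]
    have : ∀ j : Fin r, (D * blockG S s) j j = 1 := fun j => by rw [hT]; exact hd1 _
    simp [this]
  rw [Matrix.det_mul] at hdet
  exact IsUnit.of_mul_eq_one _ (by rw [mul_comm] at hdet; exact hdet)

section Dual

/-- the basic vectors used in the dual step -/
noncomputable def zfam (S : Sol a r) (s p : ZMod a) : ZMod a → ZMod 2 :=
  fun q => eVec p q +
    ∑ m : Fin r, ((blockG S s)⁻¹.mulVec (fun i => S.g i p)) m * eVec (s + ((m : ℕ) : ZMod a)) q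

lemma zfam_orth (hr : 1 ≤ r) (S : Sol a r) (s p : ZMod a) (i : Fin r) :
    dot (S.g i) (zfam S s p) = 0 := by
  unfold dot zfam
  have hsplit : ∀ q : ZMod a, S.g i q * (eVec p q +
      ∑ m : Fin r, ((blockG S s)⁻¹.mulVec (fun i => S.g i p)) m * eVec (s + ((m : ℕ) : ZMod a)) q)
      = S.g i q * eVec p q +
        ∑ m : Fin r, S.g i q * (((blockG S s)⁻¹.mulVec (fun i => S.g i p)) m
          * eVec (s + ((m : ℕ) : ZMod a)) q) := by
    intro q; rw [mul_add, Finset.mul_sum]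
  simp_rw [hsplit]
  rw [Finset.sum_add_distrib, Finset.sum_comm]
  have h1 : (∑ q : ZMod a, S.g i q * eVec p q) = S.g i p := by
    have := dot_eVec (S.g i) p 1
    simpa using this
  have h2 : ∀ m : Fin r, (∑ q : ZMod a, S.g i q *
      (((blockG S s)⁻¹.mulVec (fun i => S.g i p)) m * eVec (s + ((m : ℕ) : ZMod a)) q))
      = blockG S s i m * ((blockG S s)⁻¹.mulVec (fun i => S.g i p)) m := by
    intro m
    rw [dot_eVec (S.g i) (s + ((m : ℕ) : ZMod a)) _]
    rfl
  simp_rw [h1, h2]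
  have h3 : (∑ m : Fin r, blockG S s i m * ((blockG S s)⁻¹.mulVec (fun i => S.g i p)) m)
      = ((blockG S s) * (blockG S s)⁻¹).mulVec (fun i => S.g i p) i := by
    rw [← Matrix.mulVec_mulVec]; rfl
  rw [h3, Matrix.mul_nonsing_inv _ (inv_block hr S s), Matrix.one_mulVec]
  have : ∀ x : ZMod 2, x + x = 0 := by decide
  exact this _

lemma castne {n : ℕ} [NeZero n] {i j : ℕ} (hi : i < n) (hj : j < n) (h : i ≠ j) :
    (i : ZMod n) ≠ (j : ZMod n) := fun hc => h (castinj hi hj hc)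

lemma castval {n : ℕ} [NeZero n] (q : ZMod n) : ((q.val : ℕ) : ZMod n) = q :=
  ZMod.natCast_rightInverse q

lemma zfam_diag (S : Sol a r) (s p : ZMod a) (hp : ∀ m : Fin r, s + ((m : ℕ) : ZMod a) ≠ p) :
    zfam S s p p = 1 := by
  unfold zfam
  rw [Finset.sum_eq_zero, eVec, if_pos rfl, add_zero]
  intro m _
  rw [eVec, if_neg (fun hc => hp m hc.symm), mul_zero]

lemma zfam_zero (S : Sol a r) (s p q : ZMod a) (hqp : q ≠ p)
    (hq : ∀ m : Fin r, s + ((m : ℕ) : ZMod a) ≠ q) :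
    zfam S s p q = 0 := by
  unfold zfam
  rw [Finset.sum_eq_zero, eVec, if_neg hqp, add_zero]
  intro m _
  rw [eVec, if_neg (fun hc => hq m hc.symm), mul_zero]

/-- generators of the dual solution -/
noncomputable def dualGens (S : Sol a r) : Fin (a - r) → ZMod a → ZMod 2 :=
  fun j => zfam S 0 (((r + (j : ℕ) : ℕ)) : ZMod a)

lemma dualGens_free (hra : r < a) (S : Sol a r) (j j' : Fin (a - r)) :
    dualGens S j (((r + (j' : ℕ) : ℕ)) : ZMod a) = if j' = j then 1 else 0 := by
  have hja : r + (j : ℕ) < a := by omega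
  have hj'a : r + (j' : ℕ) < a := by omega
  split_ifs with h
  · subst h
    apply zfam_diag
    intro m
    rw [zero_add]
    exact castne (by omega) hja (by omega)
  · apply zfam_zero
    · exact castne hj'a hja (fun hc => h (Fin.ext (by omega)))
    · intro m
      rw [zero_add]
      exact castne (by omega) hj'a (by omega)

lemma dual_uniq (hr : 1 ≤ r) (hra : r < a) (S : Sol a r) (z : ZMod a → ZMod 2)
    (horth : ∀ i, dot (S.g i) z = 0) (hfree : ∀ j : ℕ, j < a - r → z ((r + j : ℕ) : ZMod a) = 0) :
    ∀ q, z q = 0 := by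
  have hmv : (blockG S 0).mulVec (fun m => z ((m : ℕ) : ZMod a)) = 0 := by
    funext i
    have h0 := horth i
    rw [dot, zsum] at h0
    rw [Finset.range_eq_Ico, ← Finset.sum_Ico_consecutive _ (Nat.zero_le r) (le_of_lt hra)] at h0
    have h2 : ∀ n ∈ Finset.Ico r a, S.g i ((n : ℕ) : ZMod a) * z ((n : ℕ) : ZMod a) = 0 := by
      intro n hn
      simp only [Finset.mem_Ico] at hn
      rw [show n = r + (n - r) by omega, hfree (n - r) (by omega), mul_zero]
    rw [Finset.sum_eq_zero h2, add_zero, ← Finset.range_eq_Ico,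
      ← Fin.sum_univ_eq_sum_range (fun n => S.g i ((n : ℕ) : ZMod a) * z ((n : ℕ) : ZMod a)) r] at h0
    simp only [Pi.zero_apply]
    rw [Matrix.mulVec, dotProduct, ← h0]
    apply Finset.sum_congr rfl
    intro m _
    rw [blockG, Matrix.of_apply, zero_add]
  have hz0 : (fun m : Fin r => z ((m : ℕ) : ZMod a)) = 0 := by
    have h1 : (fun m : Fin r => z ((m : ℕ) : ZMod a))
        = ((blockG S 0)⁻¹ * blockG S 0).mulVec (fun m => z ((m : ℕ) : ZMod a)) := by
      rw [Matrix.nonsing_inv_mul _ (inv_block hr S 0), Matrix.one_mulVec]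
    rw [h1, ← Matrix.mulVec_mulVec, hmv, Matrix.mulVec_zero]
  intro q
  have hqv : q.val < a := ZMod.val_lt q
  by_cases hlt : q.val < r
  · have := congrFun hz0 ⟨q.val, hlt⟩
    simpa [castval] using this
  · have := hfree (q.val - r) (by omega)
    rw [show r + (q.val - r) = q.val by omega, castval] at this
    exact this

lemma dot_combo {b : ℕ} (u : ZMod a → ZMod 2) (g : Fin b → ZMod a → ZMod 2)
    (c : Fin b → ZMod 2) : dot u (combo g c) = ∑ j, c j * dot u (g j) := by
  unfold dot combo
  simp only [Finset.mul_sum]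
  rw [Finset.sum_comm]
  apply Finset.sum_congr rfl
  intro j _
  exact Finset.sum_congr rfl fun q _ => by ring

lemma dual_span (hr : 1 ≤ r) (hra : r < a) (S : Sol a r) (z : ZMod a → ZMod 2)
    (horth : ∀ i, dot (S.g i) z = 0) :
    z = combo (dualGens S) (fun j => z ((r + (j : ℕ) : ℕ) : ZMod a)) := by
  set c : Fin (a - r) → ZMod 2 := fun j => z ((r + (j : ℕ) : ℕ) : ZMod a) with hc
  have horthw : ∀ i, dot (S.g i) (combo (dualGens S) c) = 0 := by
    intro i
    rw [dot_combo]
    apply Finset.sum_eq_zero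
    intro j _
    rw [dualGens, zfam_orth hr, mul_zero]
  have hfreew : ∀ j' : Fin (a - r), combo (dualGens S) c ((r + (j' : ℕ) : ℕ) : ZMod a) = c j' := by
    intro j'
    unfold combo
    rw [Finset.sum_eq_single j']
    · rw [dualGens_free hra, if_pos rfl, mul_one]
    · intro j _ hj
      rw [dualGens_free hra, if_neg (Ne.symm hj), mul_zero]
    · simp
  have hzz : ∀ q, z q + combo (dualGens S) c q = 0 := by
    apply dual_uniq hr hra S
    · intro i
      have : dot (S.g i) (fun q => z q + combo (dualGens S) c q)
          = dot (S.g i) z + dot (S.g i) (combo (dualGens S) c) := by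
        unfold dot
        rw [← Finset.sum_add_distrib]
        apply Finset.sum_congr rfl
        intro q _
        ring
      rw [this, horth, horthw, add_zero]
    · intro j hj
      have h5 := hfreew ⟨j, hj⟩
      show z _ + combo (dualGens S) c _ = 0
      rw [show ((r + j : ℕ) : ZMod a) = ((r + ((⟨j, hj⟩ : Fin (a - r)) : ℕ) : ℕ) : ZMod a) from rfl,
        h5]
      exact (by decide : ∀ x : ZMod 2, x + x = 0) _
  funext q
  exact char2 _ _ (hzz q)

/-- the dual step -/
noncomputable def solDual (hr : 1 ≤ r) (hra : r < a) (S : Sol a r) : Sol a (a - r) where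
  g := dualGens S
  combo_i := by
    intro p
    set z := zfam S (p + ((a - r : ℕ) : ZMod a)) p with hzdef
    have hspan := dual_span hr hra S z (zfam_orth hr S _ p)
    refine ⟨fun j => z ((r + (j : ℕ) : ℕ) : ZMod a), ?_, ?_⟩
    · rw [← hspan]
      apply zfam_diag
      intro m
      intro hc
      have : p + (((a - r) + (m : ℕ) : ℕ) : ZMod a) = p + 0 := by
        push_cast at hc ⊢
        rw [add_zero]
        rw [add_assoc] at hc
        exact hc
      have h2 : (((a - r) + (m : ℕ) : ℕ) : ZMod a) = ((0 : ℕ) : ZMod a) := by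
        have := add_left_cancel this
        simpa using this
      exact absurd (castinj (by omega) (by omega) h2) (by omega)
    · intro m hm1 hm2
      rw [← hspan]
      apply zfam_zero
      · intro hc
        have h2 : ((m : ℕ) : ZMod a) = ((0 : ℕ) : ZMod a) := by
          nth_rewrite 2 [show p = p + 0 by rw [add_zero]] at hc
          simpa using add_left_cancel hc
        exact absurd (castinj (by omega) (by omega) h2) (by omega)
      · intro m' hc
        have : p + (((a - r) + (m' : ℕ) : ℕ) : ZMod a) = p + ((m : ℕ) : ZMod a) := by
          push_cast at hc ⊢
          rw [add_assoc] at hc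
          exact hc
        have h2 := castinj (n := a) (by omega) (by omega) (add_left_cancel this)
        omega
  combo_ii := by
    intro p hp1 hp2
    set z := zfam S (((a - r : ℕ)) : ZMod a) ((p : ℕ) : ZMod a) with hzdef
    have hspan := dual_span hr hra S z (zfam_orth hr S _ _)
    refine ⟨fun j => z ((r + (j : ℕ) : ℕ) : ZMod a), ?_, ?_⟩
    · rw [← hspan]
      apply zfam_diag
      intro m hc
      have h2 : (((a - r) + (m : ℕ) : ℕ) : ZMod a) = ((p : ℕ) : ZMod a) := by
        push_cast at hc ⊢
        exact hc
      exact absurd (castinj (by omega) (by omega) h2) (by omega)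
    · intro i hi hne
      rw [← hspan]
      apply zfam_zero
      · exact castne (by omega) (by omega) hne
      · intro m hc
        have h2 : (((a - r) + (m : ℕ) : ℕ) : ZMod a) = ((i : ℕ) : ZMod a) := by
          push_cast at hc ⊢
          exact hc
        exact absurd (castinj (by omega) (by omega) h2) (by omega)

end Dual


end DualPart

theorem sol_exists : ∀ (s a b : ℕ), a + b ≤ s → 1 ≤ b → b ≤ a → Nat.Coprime a b →
    Nonempty (Sol a b) := by
  intro s
  induction s with
  | zero => intro a b h h1 h2 _; omega
  | succ s ih =>
    intro a b hs hb hba hco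
    rcases eq_or_lt_of_le hb with hb1 | hb2
    · -- b = 1
      cases hb1
      exact ⟨solOne a⟩
    · -- 2 ≤ b
      have hne : b ≠ a := by
        intro h
        subst h
        unfold Nat.Coprime at hco
        simp at hco
        omega
      have hab : b < a := lt_of_le_of_ne hba (by omega)
      by_cases hcase : 2 * b ≤ a
      · -- lift step
        have hco' : Nat.Coprime (a - b) b := (Nat.coprime_sub_self_left hba).mpr hco
        obtain ⟨S'⟩ := ih (a - b) b (by omega) (by omega) (by omega) hco'
        haveI : NeZero (a - b) := ⟨by omega⟩
        haveI : NeZero ((a - b) + b) := ⟨by omega⟩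
        have S2 := solLift (by omega) (by omega) S'
        have hsum : a - b + b = a := by omega
        exact ⟨hsum ▸ S2⟩
      · -- dual step
        have hco'' : Nat.Coprime a (a - b) := by
          unfold Nat.Coprime at hco ⊢
          rw [Nat.gcd_self_sub_right hba, hco]
        have harg1 : a + (a - b) ≤ s := by omega
        obtain ⟨S'⟩ := ih a (a - b) harg1 (by omega) (by omega) hco''
        haveI : NeZero a := ⟨by omega⟩
        have hr1 : 1 ≤ a - b := by omega
        have hr2 : a - b < a := by omega
        have S2 := solDual hr1 hr2 S'
        have heq : a - (a - b) = b := by omega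
        exact ⟨heq ▸ S2⟩

theorem achieve (K D U : ℕ) (hK : 0 < K) (hDK : D + 1 ≤ K) (hU : U = Nat.gcd K (D + 1) - 1) :
    ∃ E : (ZMod K → (Fin 1 → Bool)) → (Fin (D + 1) → Bool),
      ∀ k : ZMod K, ∀ x y : ZMod K → (Fin 1 → Bool), E x = E y →
        (∀ j : ZMod K,
          (j ≠ k ∧ (∀ m : ℕ, 1 ≤ m → m ≤ D → j ≠ k + (m : ZMod K)) ∧
            (∀ m : ℕ, 1 ≤ m → m ≤ U → j ≠ k - (m : ZMod K))) → x j = y j) →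
        x k = y k := by
  have hg : 0 < Nat.gcd K (D + 1) := Nat.gcd_pos_of_pos_left _ hK
  set G : ℕ := Nat.gcd K (D + 1) with hGdef
  have hgK : G ∣ K := Nat.gcd_dvd_left _ _
  have hgD : G ∣ (D + 1) := Nat.gcd_dvd_right _ _
  set a : ℕ := K / G with hadef
  set b : ℕ := (D + 1) / G with hbdef
  have hKa : K = G * a := (Nat.mul_div_cancel' hgK).symm
  have hDb : D + 1 = G * b := (Nat.mul_div_cancel' hgD).symm
  have hb : 1 ≤ b := Nat.div_pos (Nat.le_of_dvd (by omega) hgD) hg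
  have ha : 1 ≤ a := Nat.div_pos (Nat.le_of_dvd hK hgK) hg
  have hba : b ≤ a := Nat.le_of_mul_le_mul_left (by omega) hg
  have hco : Nat.Coprime a b := Nat.coprime_div_gcd_div_gcd hg
  haveI : NeZero K := ⟨hK.ne'⟩
  haveI : NeZero a := ⟨by omega⟩
  obtain ⟨S⟩ := sol_exists (a + b) a b le_rfl hb hba hco
  set eqv : Fin (D + 1) ≃ Fin G × Fin b := (finCongr hDb).trans finProdFinEquiv.symm with heqv
  set CC : Fin G × Fin b → ZMod K → ZMod 2 :=
    fun ci q => if q.val % G = (ci.1 : ℕ) then S.g ci.2 ((q.val / G : ℕ) : ZMod a) else 0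
    with hCC
  refine ⟨fun x n => decide ((∑ q : ZMod K, CC (eqv n) q *
    (if x q 0 then (1 : ZMod 2) else 0)) = 1), ?_⟩
  intro k x y hE hknown
  obtain ⟨d, hd1, hd2⟩ := S.combo_i ((k.val / G : ℕ) : ZMod a)
  set w : ZMod K → ZMod 2 :=
    fun q => if q.val % G = k.val % G then combo S.g d ((q.val / G : ℕ) : ZMod a) else 0
    with hwdef
  have F1 : w k = 1 := by rw [hwdef]; simp only [if_pos rfl]; exact hd1
  -- zero at forward window
  have F2 : ∀ m : ℕ, 1 ≤ m → m ≤ D → w (k + (m : ZMod K)) = 0 := by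
    intro m hm1 hm2
    have hmK : m < K := by omega
    have hval : (k + (m : ZMod K)).val = (k.val + m) % K := by
      rw [ZMod.val_add, ZMod.val_cast_of_lt hmK]
    have hmod : (k + (m : ZMod K)).val % G = (k.val + m) % G := by
      rw [hval, Nat.mod_mod_of_dvd _ hgK]
    by_cases hdvd : G ∣ m
    · -- aligned position : use the window condition
      obtain ⟨j, hj⟩ := hdvd
      have hj1 : 1 ≤ j := Nat.pos_of_ne_zero (fun h0 => by
        rw [h0, mul_zero] at hj
        omega)
      have hjb : j ≤ b - 1 := by
        by_contra h
        have : b ≤ j := by omega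
        have : G * b ≤ G * j := Nat.mul_le_mul_left G this
        omega
      have hcond : (k + (m : ZMod K)).val % G = k.val % G := by
        rw [hmod, hj, Nat.add_mul_mod_self_left]
      rw [hwdef]
      simp only [hcond, if_pos rfl]
      have hdiv : (k + (m : ZMod K)).val / G = (k.val / G + j) % a := by
        have h7 : (k.val + m) % (G * a) / G = (k.val + m) / G % a :=
          Nat.mod_mul_right_div_self _ _ _
        rw [← hKa] at h7
        rw [hval, h7, hj, Nat.add_mul_div_left _ _ hg]
      have hcast : (((k + (m : ZMod K)).val / G : ℕ) : ZMod a)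
          = ((k.val / G : ℕ) : ZMod a) + ((j : ℕ) : ZMod a) := by
        rw [hdiv, ZMod.natCast_mod, Nat.cast_add]
      rw [hcast]
      exact hd2 j hj1 hjb
    · -- unaligned : the coefficient vanishes
      rw [hwdef]
      simp only
      rw [if_neg]
      rw [hmod]
      intro hcon
      have h1 : (k.val + m) ≡ k.val + 0 [MOD G] := by
        unfold Nat.ModEq
        rw [add_zero]
        exact hcon
      have h2 : m ≡ 0 [MOD G] := Nat.ModEq.add_left_cancel' k.val h1
      exact hdvd (Nat.dvd_of_mod_eq_zero (by simpa [Nat.ModEq] using h2))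
  -- zero at backward window
  have F3 : ∀ m : ℕ, 1 ≤ m → m ≤ U → w (k - (m : ZMod K)) = 0 := by
    intro m hm1 hm2
    have hUG : U = G - 1 := hU
    have hGK : G ≤ K := Nat.le_of_dvd hK hgK
    have hmG : m < G := by omega
    have hmK : m < K := by omega
    rw [hwdef]
    simp only
    rw [if_neg]
    intro hcon
    have hsum : (k - (m : ZMod K)) + (m : ZMod K) = k := by ring
    have hval : ((k - (m : ZMod K)) + (m : ZMod K)).val = ((k - (m : ZMod K)).val + m) % K := by
      rw [ZMod.val_add, ZMod.val_cast_of_lt hmK]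
    have hsum2 := congrArg (fun t : ZMod K => t.val % G) hsum
    have hmodk : k.val % G = ((k - (m : ZMod K)).val + m) % G := by
      rw [← hsum2, hval, Nat.mod_mod_of_dvd _ hgK]
    rw [← hcon] at hmodk
    have h1 : (k - (m : ZMod K)).val + 0 ≡ (k - (m : ZMod K)).val + m [MOD G] := by
      unfold Nat.ModEq
      rw [add_zero]
      exact hmodk
    have h2 : (0 : ℕ) ≡ m [MOD G] := Nat.ModEq.add_left_cancel' _ h1
    have h3 : G ∣ m := Nat.dvd_of_mod_eq_zero (by simpa [Nat.ModEq] using h2.symm)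
    have := Nat.le_of_dvd (by omega) h3
    omega
  -- w is a combination of the columns
  have F4 : ∀ q : ZMod K, w q
      = ∑ ci : Fin G × Fin b, (if (ci.1 : ℕ) = k.val % G then d ci.2 else 0) * CC ci q := by
    intro q
    rw [Fintype.sum_prod_type]
    rw [Finset.sum_eq_single (⟨k.val % G, Nat.mod_lt _ hg⟩ : Fin G)]
    · simp only [if_pos rfl]
      rw [hwdef, hCC]
      simp only
      by_cases hcond : q.val % G = k.val % G
      · rw [if_pos hcond]
        rw [Finset.sum_congr rfl (fun i _ => by rw [if_pos hcond])]
        rfl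
      · rw [if_neg hcond]
        rw [Finset.sum_congr rfl (fun i _ => by rw [if_neg hcond, mul_zero])]
        rw [Finset.sum_const_zero]
    · intro c _ hcne
      have : ¬ ((c : ℕ) = k.val % G) := by
        intro h
        exact hcne (Fin.ext h)
      rw [Finset.sum_congr rfl (fun i _ => by rw [if_neg this, zero_mul]), Finset.sum_const_zero]
    · intro h
      exact absurd (Finset.mem_univ _) h
  -- the transmitted sums agree
  have hEq : ∀ n : Fin (D + 1),
      (∑ q : ZMod K, CC (eqv n) q * (if x q 0 then (1 : ZMod 2) else 0))
        = ∑ q : ZMod K, CC (eqv n) q * (if y q 0 then (1 : ZMod 2) else 0) := by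
    intro n
    have h1 := congrFun hE n
    simp only [decide_eq_decide] at h1
    exact (by decide : ∀ z w : ZMod 2, ((z = 1) ↔ (w = 1)) → z = w) _ _ h1
  have hswap : ∀ v : ZMod K → ZMod 2, (∑ q : ZMod K, w q * v q)
      = ∑ n : Fin (D + 1), (if ((eqv n).1 : ℕ) = k.val % G then d (eqv n).2 else 0)
          * ∑ q : ZMod K, CC (eqv n) q * v q := by
    intro v
    have h1 : (∑ q : ZMod K, w q * v q)
        = ∑ ci : Fin G × Fin b, (if (ci.1 : ℕ) = k.val % G then d ci.2 else 0)
            * ∑ q : ZMod K, CC ci q * v q := by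
      rw [Finset.sum_congr rfl (fun q _ => by rw [F4 q, Finset.sum_mul])]
      rw [Finset.sum_comm]
      apply Finset.sum_congr rfl
      intro ci _
      rw [Finset.mul_sum]
      exact Finset.sum_congr rfl fun q _ => by ring
    rw [h1]
    exact (Equiv.sum_comp eqv _).symm
  have hx : (∑ q : ZMod K, w q * (if x q 0 then (1 : ZMod 2) else 0))
      = ∑ q : ZMod K, w q * (if y q 0 then (1 : ZMod 2) else 0) := by
    rw [hswap, hswap]
    exact Finset.sum_congr rfl fun n _ => by rw [hEq n]
  have hzero : (∑ q : ZMod K, w q *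
      ((if x q 0 then (1 : ZMod 2) else 0) + (if y q 0 then (1 : ZMod 2) else 0))) = 0 := by
    have h2 : (∑ q : ZMod K, w q *
        ((if x q 0 then (1 : ZMod 2) else 0) + (if y q 0 then (1 : ZMod 2) else 0)))
        = (∑ q : ZMod K, w q * (if x q 0 then (1 : ZMod 2) else 0))
          + ∑ q : ZMod K, w q * (if y q 0 then (1 : ZMod 2) else 0) := by
      rw [← Finset.sum_add_distrib]
      exact Finset.sum_congr rfl fun q _ => by ring
    rw [h2, hx]
    exact (by decide : ∀ z : ZMod 2, z + z = 0) _
  have hsingle : (∑ q : ZMod K, w q *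
      ((if x q 0 then (1 : ZMod 2) else 0) + (if y q 0 then (1 : ZMod 2) else 0)))
      = w k * ((if x k 0 then (1 : ZMod 2) else 0) + (if y k 0 then (1 : ZMod 2) else 0)) := by
    rw [Finset.sum_eq_single k]
    · intro q _ hq
      by_cases hw0 : w q = 0
      · rw [hw0, zero_mul]
      · have hxy : x q = y q := by
          apply hknown q
          refine ⟨hq, ?_, ?_⟩
          · intro m hm1 hm2 hqe
            rw [hqe] at hw0
            exact hw0 (F2 m hm1 hm2)
          · intro m hm1 hm2 hqe
            rw [hqe] at hw0
            exact hw0 (F3 m hm1 hm2)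
        rw [hxy]
        rw [(by decide : ∀ z : ZMod 2, z + z = 0) _, mul_zero]
    · intro h
      exact absurd (Finset.mem_univ _) h
  have hfinal : ((if x k 0 then (1 : ZMod 2) else 0) + (if y k 0 then (1 : ZMod 2) else 0))
      = 0 := by
    have h9 := hsingle.symm.trans hzero
    rwa [F1, one_mul] at h9
  have hbool : x k 0 = y k 0 := by
    revert hfinal
    by_cases h1 : x k 0 <;> by_cases h2 : y k 0 <;> simp [h1, h2]
  funext i
  have : i = 0 := Subsingleton.elim _ _
  rw [this, hbool]

theorem converse {K D U t N : ℕ} [NeZero K] (hDK : D + 1 ≤ K)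
    (E : (ZMod K → (Fin t → Bool)) → (Fin N → Bool))
    (hdec : ∀ k : ZMod K, ∀ x y : ZMod K → (Fin t → Bool), E x = E y →
      (∀ j : ZMod K, (j ≠ k ∧ (∀ m : ℕ, 1 ≤ m → m ≤ D → j ≠ k + (m : ZMod K)) ∧
        (∀ m : ℕ, 1 ≤ m → m ≤ U → j ≠ k - (m : ZMod K))) → x j = y j) → x k = y k) :
    (D + 1) * t ≤ N := by
  have hK : 0 < K := Nat.pos_of_ne_zero (NeZero.ne K)
  set ext : (Fin (D + 1) → Fin t → Bool) → (ZMod K → Fin t → Bool) :=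
    fun u q => if h : q.val < D + 1 then u ⟨q.val, h⟩ else fun _ => false with hext
  have hinj : Function.Injective (fun u => E (ext u)) := by
    intro u v huv
    have key : ∀ i : ℕ, i ≤ D → ext u ((i : ℕ) : ZMod K) = ext v ((i : ℕ) : ZMod K) := by
      intro i
      induction i using Nat.strong_induction_on with
      | _ i ih =>
        intro hiD
        apply hdec ((i : ℕ) : ZMod K) (ext u) (ext v) huv
        rintro j ⟨hj1, hj2, -⟩
        by_cases hjv : j.val < D + 1
        · have hjc : ((j.val : ℕ) : ZMod K) = j := castval j
          have hlt : j.val < i := by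
            rcases lt_trichotomy j.val i with h | h | h
            · exact h
            · exact absurd (by rw [← hjc, h]) hj1
            · exfalso
              apply hj2 (j.val - i) (by omega) (by omega)
              have h8 : ((i + (j.val - i) : ℕ) : ZMod K) = ((i : ℕ) : ZMod K)
                  + ((j.val - i : ℕ) : ZMod K) := Nat.cast_add _ _
              rw [← h8, show i + (j.val - i) = j.val by omega, hjc]
          rw [← hjc]
          exact ih j.val hlt (by omega)
        · rw [hext]
          simp only [dif_neg hjv]
    apply funext
    intro i
    have h1 := key i.val (by omega)
    have hv : ((i.val : ℕ) : ZMod K).val = i.val := ZMod.val_cast_of_lt (by omega)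
    rw [hext] at h1
    simp only [hv, dif_pos i.isLt, Fin.eta] at h1
    exact h1
  have hcard := Fintype.card_le_of_injective _ hinj
  simp only [Fintype.card_fun, Fintype.card_bool, Fintype.card_fin] at hcard
  rw [← pow_mul] at hcard
  have h2 : t * (D + 1) ≤ N := (Nat.pow_le_pow_iff_right (by norm_num : 1 < 2)).mp hcard
  rw [Nat.mul_comm]
  exact h2

end SNI

/-- The broadcast rate of the SNI-SUICP with `K` messages, `D` interfering messages after
and `U = gcd(K, D+1) - 1` interfering messages before the desired message is exactly `D+1`
(equivalently, the capacity is `1/(D+1)`): `D+1` is the greatest lower bound of the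
achievable normalized lengths `N/t` of valid index codes on `t`-bit messages.  A code
`E` is valid iff every receiver `k` can decode `x_k` from `E(x)` and its side-information
(all messages except `x_k` and the interference). -/
theorem stmt15 (K D U : ℕ) (hK : 0 < K) (hDK : D + 1 ≤ K)
    (hU : U = Nat.gcd K (D + 1) - 1) :
    IsGLB { r : ℝ | ∃ (t N : ℕ) (E : (ZMod K → (Fin t → Bool)) → (Fin N → Bool)),
      0 < t ∧ r = (N : ℝ) / (t : ℝ) ∧
      ∀ k : ZMod K, ∀ x y : ZMod K → (Fin t → Bool), E x = E y →
        (∀ j : ZMod K,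
          (j ≠ k ∧ (∀ m : ℕ, 1 ≤ m → m ≤ D → j ≠ k + (m : ZMod K)) ∧
            (∀ m : ℕ, 1 ≤ m → m ≤ U → j ≠ k - (m : ZMod K))) → x j = y j) →
        x k = y k } ((D : ℝ) + 1) := by
  haveI : NeZero K := ⟨hK.ne'⟩
  constructor
  · rintro r ⟨t, N, E, ht, rfl, hdec⟩
    have h1 : (D + 1) * t ≤ N := SNI.converse hDK E hdec
    have ht' : (0 : ℝ) < (t : ℝ) := by exact_mod_cast ht
    rw [le_div_iff₀ ht']
    calc ((D : ℝ) + 1) * (t : ℝ) = (((D + 1) * t : ℕ) : ℝ) := by push_cast; ring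
    _ ≤ ((N : ℕ) : ℝ) := Nat.cast_le.mpr h1
  · intro β hβ
    apply hβ
    obtain ⟨E, hE⟩ := SNI.achieve K D U hK hDK hU
    refine ⟨1, D + 1, E, one_pos, ?_, hE⟩
    push_cast
    norm_num
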